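/- Given a SOLP collection {P_1,...,P_n}, let P_u = ∪_{1≤i≤n} Γ'(A(P̂_i)). Then SM(P_u) = B, where B = { ((F^1)_{P_1} ∪ (G^1)_{P_1}) ∪ ... ∪ ((F^n)_{P_n} ∪ (G^n)_{P_n}) : for every i, F^i ∈ AFP(P_i) and (G^i)_{P_i} = [F^i]_{P_i} ∖ (F^i)_{P_i} }. -/

import Mathlib

namespace SOLP

/-- Literals: an atom or its negation-as-failure (NAF). -/
inductive Lit (α : Type) where
  | pos (a : α)
  | neg (a : α)

/-- The atom of a literal. -/
def Lit.atom {α : Type} : Lit α → α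
  | .pos a => a
  | .neg a => a

/-- Classical truth of a literal w.r.t. an interpretation. -/
def Lit.holds {α : Type} (I : Set α) : Lit α → Prop
  | .pos a => a ∈ I
  | .neg a => a ∉ I

/-- Renaming of literals. -/
def Lit.map {α β : Type} (f : α → β) : Lit α → Lit β
  | .pos a => .pos (f a)
  | .neg a => .neg (f a)

/-- Selection condition of a social condition: either a member selection `[P_k]`
naming one program, or a cardinal selection `[l,h]`. -/
inductive Cond (n : ℕ) where
  | member (k : Fin n)
  | card (l h : ℕ)

/-- Social conditions (SCs): a selection condition, a content (set of literals)
and a skeleton (set of nested SCs). -/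
inductive SC (α : Type) (n : ℕ) where
  | mk (cond : Cond n) (content : List (Lit α)) (skel : List (SC α n))

/-- Occurrence of an atom in a social condition. -/
inductive SC.HasAtom {α : Type} {n : ℕ} (a : α) : SC α n → Prop where
  | content {c : Cond n} {cont : List (Lit α)} {skel : List (SC α n)} {b : Lit α}
      (hb : b ∈ cont) (h : b.atom = a) : SC.HasAtom a (.mk c cont skel)
  | skel {c : Cond n} {cont : List (Lit α)} {skel : List (SC α n)} {s' : SC α n}
      (hs : s' ∈ skel) (h : SC.HasAtom a s') : SC.HasAtom a (.mk c cont skel)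

/-- Well-formed social conditions: either simple (empty skeleton), or a cardinal
SC all of whose nested SCs are either well-formed cardinal SCs with `h' ≤ h`, or
simple member SCs. -/
inductive SC.WF {α : Type} {n : ℕ} : SC α n → Prop where
  | simple (c : Cond n) (content : List (Lit α)) : SC.WF (.mk c content [])
  | card (l h : ℕ) (content : List (Lit α)) (skel : List (SC α n))
      (hshape : ∀ s' ∈ skel,
        (∃ (l' h' : ℕ) (c' : List (Lit α)) (sk' : List (SC α n)),
            s' = SC.mk (.card l' h') c' sk' ∧ h' ≤ h) ∨
        (∃ (k : Fin n) (c' : List (Lit α)), s' = SC.mk (.member k) c' []))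
      (hwf : ∀ s' ∈ skel, ∀ (l' h' : ℕ) (c' : List (Lit α)) (sk' : List (SC α n)),
          s' = SC.mk (.card l' h') c' sk' → SC.WF s') :
      SC.WF (.mk (.card l h) content skel)

/-- A social rule: head atom (marked as a tolerance rule if the real head is
`okay(head)`), a body of literals, and a list of SCs, each marked positive
(`true`) or NAF (`false`). -/
structure SRule (α : Type) (n : ℕ) where
  head : α
  isOkay : Bool
  lits : List (Lit α)
  scs : List (SC α n × Bool)

/-- A SOLP program. -/
abbrev SProgram (α : Type) (n : ℕ) := Set (SRule α n)

/-- `okay(p) ← body` becomes `p ← p, body`; other rules are unchanged. -/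
def hatP {α : Type} {n : ℕ} (P : SProgram α n) : SProgram α n :=
  {r ∈ P | r.isOkay = false} ∪
    (fun r : SRule α n => ⟨r.head, false, .pos r.head :: r.lits, r.scs⟩) ''
      {r ∈ P | r.isOkay = true}

/-- The autonomous reduction: remove all social conditions. -/
def AP {α : Type} {n : ℕ} (P : SProgram α n) : SProgram α n :=
  (fun r : SRule α n => ⟨r.head, r.isOkay, r.lits, []⟩) '' P

/-- The atoms occurring in a SOLP program. -/
def SVar {α : Type} {n : ℕ} (P : SProgram α n) : Set α :=
  {a | ∃ r ∈ P, r.head = a ∨ (∃ b ∈ r.lits, Lit.atom b = a) ∨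
        (∃ p ∈ r.scs, SC.HasAtom a p.1)}

/-- Truth of a list of literals w.r.t. an interpretation. -/
def litsTrue {α : Type} (I : Set α) (L : List (Lit α)) : Prop := ∀ b ∈ L, b.holds I

/-- The autonomous immediate consequence operator `AT_P`. -/
def ATP {α : Type} {n : ℕ} (P : SProgram α n) (I : Set α) : Set α :=
  {a | ∃ r ∈ AP P, r.isOkay = false ∧ r.head = a ∧ litsTrue I r.lits} ∪
  {a | ∃ r ∈ AP P, r.isOkay = true ∧ r.head = a ∧ a ∈ I ∧ litsTrue I r.lits}

/-- Autonomous fixpoints of a SOLP program. -/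
def AFP {α : Type} {n : ℕ} (P : SProgram α n) : Set (Set α) :=
  {I | I ⊆ SVar (AP P) ∧ ATP P I = I}

/-- Social interpretations: sets of labelled atoms `a_{P_i}`. -/
abbrev SInterp (α : Type) (n : ℕ) := Set (Fin n × α)

/-- Truth of a literal for program `p` w.r.t. a social interpretation. -/
def Lit.trueFor {α : Type} {n : ℕ} (I : SInterp α n) (p : Fin n) : Lit α → Prop
  | .pos a => (p, a) ∈ I
  | .neg a => (p, a) ∉ I

/-- Truth of an SC of `P_j` in a sub-collection `C'` w.r.t. a social interpretation. -/
inductive SC.TrueIn {α : Type} {n : ℕ} (I : SInterp α n) (j : Fin n) :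
    Set (Fin n) → SC α n → Prop where
  | member {C' : Set (Fin n)} {k : Fin n} {content : List (Lit α)} {skel : List (SC α n)}
      (hk : k ∈ C') (hc : ∀ b ∈ content, Lit.trueFor I k b) :
      SC.TrueIn I j C' (.mk (.member k) content skel)
  | card {C' : Set (Fin n)} {l h : ℕ} {content : List (Lit α)} {skel : List (SC α n)}
      (D : Finset (Fin n)) (hD : ∀ p ∈ D, p ∈ C' ∧ p ≠ j)
      (hl : l ≤ D.card) (hh : D.card ≤ h)
      (hc : ∀ b ∈ content, ∀ p ∈ D, Lit.trueFor I p b)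
      (D' : ∀ s' ∈ skel, Finset (Fin n))
      (hsub : ∀ (s' : SC α n) (hs' : s' ∈ skel), D' s' hs' ⊆ D)
      (hs : ∀ (s' : SC α n) (hs' : s' ∈ skel), SC.TrueIn I j ↑(D' s' hs') s') :
      SC.TrueIn I j C' (.mk (.card l h) content skel)

/-- `s` is true for `P_j` w.r.t. `Ī` (in the whole collection). -/
def SC.TrueFor {α : Type} {n : ℕ} (I : SInterp α n) (j : Fin n) (s : SC α n) : Prop :=
  SC.TrueIn I j Set.univ s

/-- Truth of the body of a social rule of `P_j` w.r.t. a social interpretation. -/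
def SRule.bodyTrue {α : Type} {n : ℕ} (I : SInterp α n) (j : Fin n) (r : SRule α n) : Prop :=
  (∀ b ∈ r.lits, Lit.trueFor I j b) ∧
  (∀ p ∈ r.scs, (p.2 = true → SC.TrueFor I j p.1) ∧ (p.2 = false → ¬ SC.TrueFor I j p.1))

/-- The social immediate consequence operator `ST_C`. -/
def STC {α : Type} {n : ℕ} (C : Fin n → SProgram α n) (I : SInterp α n) : SInterp α n :=
  {x | ∃ r ∈ C x.1, r.isOkay = false ∧ r.head = x.2 ∧ SRule.bodyTrue I x.1 r} ∪
  {x | ∃ r ∈ C x.1, r.isOkay = true ∧ r.head = x.2 ∧ x ∈ I ∧ SRule.bodyTrue I x.1 r}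

/-- The labelled version `(L)_{P_i}` of a set of atoms. -/
def labelled {α : Type} {n : ℕ} (i : Fin n) (L : Set α) : SInterp α n :=
  {x | x.1 = i ∧ x.2 ∈ L}

/-- Candidate social interpretations: combinations of autonomous fixpoints. -/
def Candidate {α : Type} {n : ℕ} (C : Fin n → SProgram α n) (I : SInterp α n) : Prop :=
  ∃ F : Fin n → Set α, (∀ i, F i ∈ AFP (C i)) ∧ I = ⋃ i, labelled i (F i)

/-- The Social Semantics: the set of social models. -/
def SOS {α : Type} {n : ℕ} (C : Fin n → SProgram α n) : Set (SInterp α n) :=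
  {I | Candidate C I ∧ STC C I = I}

/-! ### Traditional (normal) logic programs -/

/-- A normal logic-program rule. -/
structure NRule (γ : Type) where
  head : γ
  body : List (Lit γ)

abbrev NProgram (γ : Type) := Set (NRule γ)

/-- The atoms occurring in a normal program. -/
def NVar {γ : Type} (P : NProgram γ) : Set γ :=
  {a | ∃ r ∈ P, r.head = a ∨ ∃ b ∈ r.body, Lit.atom b = a}

/-- The immediate consequence operator `T_P`. -/
def TN {γ : Type} (P : NProgram γ) (I : Set γ) : Set γ :=
  {a | ∃ r ∈ P, r.head = a ∧ ∀ b ∈ r.body, b.holds I}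

/-- Fixpoints of a traditional program. -/
def NFP {γ : Type} (P : NProgram γ) : Set (Set γ) :=
  {I | I ⊆ NVar P ∧ TN P I = I}

/-- Keep a positive literal, drop a negative one. -/
def Lit.posOnly {γ : Type} : Lit γ → Option (Lit γ)
  | .pos a => some (.pos a)
  | .neg _ => none

/-- The Gelfond–Lifschitz reduct `P^M`. -/
def GLReduct {γ : Type} (P : NProgram γ) (M : Set γ) : NProgram γ :=
  {r | ∃ r' ∈ P, (∀ c : γ, Lit.neg c ∈ r'.body → c ∉ M) ∧
        r = ⟨r'.head, r'.body.filterMap Lit.posOnly⟩}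

/-- The least model of a (positive) program, as the intersection of all sets
closed under its rules. -/
def LeastModel {γ : Type} (P : NProgram γ) : Set γ :=
  ⋂₀ {I | ∀ r ∈ P, (∀ a : γ, Lit.pos a ∈ r.body → a ∈ I) → r.head ∈ I}

/-- Stable models (Gelfond–Lifschitz) of a normal program. -/
def SMN {γ : Type} (P : NProgram γ) : Set (Set γ) :=
  {M | M = LeastModel (GLReduct P M)}

/-! ### The translation vocabulary -/

/-- Atoms of the translated programs: `a_P`, `a'_P`, `sa_P`, `fail_P`, `ρ(s)_P`
and the `g(s)(k)_P` predicates. -/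
inductive GAtom (α : Type) (n : ℕ) where
  | atm (a : α)
  | prim (a : α)
  | sup (a : α)
  | fail
  | rho (s : SC α n)
  | g (s : SC α n) (k : Fin n)

/-- The guessing rules `S_1` over a vocabulary `V`. -/
def GammaS1 {α : Type} {n : ℕ} (V : Set α) : NProgram (GAtom α n) :=
  {r | ∃ a ∈ V, r = ⟨GAtom.atm a, [Lit.neg (GAtom.prim a)]⟩ ∨
                r = ⟨GAtom.prim a, [Lit.neg (GAtom.atm a)]⟩}

/-- The checking rules `S_3` over a vocabulary `V`. -/
def GammaS3 {α : Type} {n : ℕ} (V : Set α) : NProgram (GAtom α n) :=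
  {r | ∃ a ∈ V,
      r = ⟨GAtom.fail, [Lit.neg GAtom.fail, Lit.pos (GAtom.sup a), Lit.neg (GAtom.atm a)]⟩ ∨
      r = ⟨GAtom.fail, [Lit.neg GAtom.fail, Lit.pos (GAtom.atm a), Lit.neg (GAtom.sup a)]⟩}

/-- The transformation `Γ` of Buccafurri–Gottlob, for traditional programs. -/
def Gamma {α : Type} {n : ℕ} (P : NProgram α) : NProgram (GAtom α n) :=
  GammaS1 (NVar P) ∪
  {r | ∃ r' ∈ P, r = ⟨GAtom.sup r'.head, r'.body.map (Lit.map GAtom.atm)⟩} ∪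
  GammaS3 (NVar P)

/-- The translated body of a social rule: labelled literals followed by the
`ρ`-literals corresponding to its (possibly NAF'd) SCs. -/
def SRule.transBody {α : Type} {n : ℕ} (r : SRule α n) : List (Lit (GAtom α n)) :=
  r.lits.map (Lit.map GAtom.atm) ++
    r.scs.map (fun p => if p.2 then Lit.pos (GAtom.rho p.1) else Lit.neg (GAtom.rho p.1))

/-- The extended transformation `Γ'` for SOLP programs. -/
def Gamma' {α : Type} {n : ℕ} (Q : SProgram α n) : NProgram (GAtom α n) :=
  GammaS1 (SVar (AP (hatP Q))) ∪
  {r | ∃ r' ∈ Q, r = ⟨GAtom.sup r'.head, SRule.transBody r'⟩} ∪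
  GammaS3 (SVar (AP (hatP Q)))

/-- Forget the SCs (and okay-marking) of a social rule, yielding a traditional rule. -/
def SRule.toN {α : Type} {n : ℕ} (r : SRule α n) : NRule α := ⟨r.head, r.lits⟩

/-- View an SC-free SOLP program as a traditional program. -/
def toTrad {α : Type} {n : ℕ} (P : SProgram α n) : NProgram α := SRule.toN '' P

/-- The encoding `[M]_P` of an interpretation of a SOLP program `P`. -/
def encode {α : Type} {n : ℕ} (P : SProgram α n) (M : Set α) : Set (GAtom α n) :=
  (GAtom.atm '' M) ∪ (GAtom.prim '' (SVar (AP (hatP P)) \ M)) ∪ (GAtom.sup '' M)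

/-- The encoding `[M]_P` of an interpretation of a traditional program `P`. -/
def encodeN {α : Type} (n : ℕ) (P : NProgram α) (M : Set α) : Set (GAtom α n) :=
  (GAtom.atm '' M) ∪ (GAtom.prim '' (NVar P \ M)) ∪ (GAtom.sup '' M)

/-- Renaming of rules. -/
def NRule.map {γ δ : Type} (f : γ → δ) (r : NRule γ) : NRule δ :=
  ⟨f r.head, r.body.map (Lit.map f)⟩

/-- Labelling of a whole program w.r.t. `P_i`. -/
def labProg {γ : Type} {n : ℕ} (i : Fin n) (P : NProgram γ) : NProgram (Fin n × γ) :=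
  (NRule.map (fun a => (i, a))) '' P

/-! ### Aggregate programs -/

/-- A `#count` aggregate `l ≤ #count{K : atomOf K, cond K} ≤ h`. -/
structure CountAgg (γ : Type) (κ : Type) where
  l : ℕ
  h : ℕ
  atomOf : κ → γ
  cond : κ → Prop

/-- Truth of a count aggregate w.r.t. an interpretation. -/
def CountAgg.holds {γ κ : Type} (M : Set γ) (c : CountAgg γ κ) : Prop :=
  c.l ≤ Set.ncard {K | c.cond K ∧ c.atomOf K ∈ M} ∧
  Set.ncard {K | c.cond K ∧ c.atomOf K ∈ M} ≤ c.h

/-- A rule of a logic program with count aggregates. -/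
structure ARule (γ : Type) (κ : Type) where
  head : γ
  body : List (Lit γ)
  aggs : List (CountAgg γ κ)

abbrev AProgram (γ : Type) (κ : Type) := Set (ARule γ κ)

/-- Truth of the body of an aggregate rule. -/
def ARule.bodyHolds {γ κ : Type} (M : Set γ) (r : ARule γ κ) : Prop :=
  (∀ b ∈ r.body, b.holds M) ∧ (∀ c ∈ r.aggs, c.holds M)

/-- `M` is a (classical) model of an aggregate program. -/
def AModel {γ κ : Type} (P : AProgram γ κ) (M : Set γ) : Prop :=
  ∀ r ∈ P, r.bodyHolds M → r.head ∈ M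

/-- Stable (answer-set) semantics for aggregate programs: `M` is a minimal model
of the reduct consisting of the rules whose bodies are true w.r.t. `M`. -/
def AStable {γ κ : Type} (P : AProgram γ κ) (M : Set γ) : Prop :=
  AModel P M ∧
  ∀ N : Set γ, N ⊆ M → (∀ r ∈ P, r.bodyHolds M → r.bodyHolds N → r.head ∈ N) → N = M

/-- An aggregate-free rule, seen as an aggregate rule. -/
def NRule.toA {γ : Type} (κ : Type) (r : NRule γ) : ARule γ κ := ⟨r.head, r.body, []⟩

def toAProg {γ : Type} (κ : Type) (P : NProgram γ) : AProgram γ κ := NRule.toA κ '' P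

/-! ### The translation `Ψ` of social conditions -/

/-- Membership of a rule in the translation `Ψ^{P_j}(s)` of a social condition. -/
inductive PsiMem {α : Type} {n : ℕ} (j : Fin n) :
    SC α n → ARule (Fin n × GAtom α n) (Fin n) → Prop where
  | memberGuess (k : Fin n) (content : List (Lit α)) (skel : List (SC α n)) :
      PsiMem j (.mk (.member k) content skel)
        ⟨(j, GAtom.g (.mk (.member k) content skel) k),
          content.map (Lit.map fun a => (k, GAtom.atm a)), []⟩
  | memberCheck (k : Fin n) (content : List (Lit α)) (skel : List (SC α n)) :
      PsiMem j (.mk (.member k) content skel)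
        ⟨(j, GAtom.rho (.mk (.member k) content skel)),
          [Lit.pos (j, GAtom.g (.mk (.member k) content skel) k)], []⟩
  | cardGuess (l h : ℕ) (content : List (Lit α)) (skel : List (SC α n))
      (i : Fin n) (hij : i ≠ j) :
      PsiMem j (.mk (.card l h) content skel)
        ⟨(j, GAtom.g (.mk (.card l h) content skel) i),
          content.map (Lit.map fun a => (i, GAtom.atm a)) ++
            skel.map (fun s' => Lit.pos (j, GAtom.rho s')), []⟩
  | cardCheck (l h : ℕ) (content : List (Lit α)) (skel : List (SC α n)) :
      PsiMem j (.mk (.card l h) content skel)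
        ⟨(j, GAtom.rho (.mk (.card l h) content skel)), [],
          [⟨l, h, fun K => (j, GAtom.g (.mk (.card l h) content skel) K),
            fun K => K ≠ j⟩]⟩
  | nested (l h : ℕ) (content : List (Lit α)) (skel : List (SC α n))
      (s' : SC α n) (hs : s' ∈ skel) (r : ARule (Fin n × GAtom α n) (Fin n))
      (hr : PsiMem j s' r) :
      PsiMem j (.mk (.card l h) content skel) r

/-- The translation `Ψ^{P_j}(s)` of a single social condition. -/
def Psi {α : Type} {n : ℕ} (j : Fin n) (s : SC α n) :
    AProgram (Fin n × GAtom α n) (Fin n) :=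
  {r | PsiMem j s r}

/-- The depth-0 social conditions of a SOLP program. -/
def MSC {α : Type} {n : ℕ} (P : SProgram α n) : Set (SC α n) :=
  {s | ∃ r ∈ P, ∃ b : Bool, (s, b) ∈ r.scs}

/-- The SC translation `C(P_1, ..., P_n)` of a whole SOLP collection. -/
def CTrans {α : Type} {n : ℕ} (C : Fin n → SProgram α n) :
    AProgram (Fin n × GAtom α n) (Fin n) :=
  ⋃ j, ⋃ s ∈ MSC (C j), Psi j s

/-- The program of facts `{a ← : a ∈ Ī}` corresponding to a social interpretation. -/
def factProg {α : Type} {n : ℕ} (I : SInterp α n) :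
    AProgram (Fin n × GAtom α n) (Fin n) :=
  {r | ∃ x ∈ I, r = ⟨(x.1, GAtom.atm x.2), [], []⟩}

/-- The set `SAT^{P_j}_{Ī}(s)` of heads of rules of `Ψ^{P_j}(s)` belonging to
some stable model of `C(P_1,...,P_n) ∪ Q`. -/
def SAT {α : Type} {n : ℕ} (C : Fin n → SProgram α n) (I : SInterp α n)
    (j : Fin n) (s : SC α n) : Set (Fin n × GAtom α n) :=
  {x | (∃ r, PsiMem j s r ∧ r.head = x) ∧
       ∃ M, AStable (CTrans C ∪ factProg I) M ∧ x ∈ M}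

/-! ### COLP programs -/

/-- A COLP rule: a classical rule or an okay-rule, with a body of literals. -/
structure CRule (α : Type) where
  head : α
  isOkay : Bool
  lits : List (Lit α)

abbrev CProgram (α : Type) := Set (CRule α)

/-- The hat operator on COLP programs: `okay(p) ← body` becomes `p ← p, body`. -/
def CRule.hatN {α : Type} (r : CRule α) : NRule α :=
  if r.isOkay then ⟨r.head, .pos r.head :: r.lits⟩ else ⟨r.head, r.lits⟩

def hatC {α : Type} (P : CProgram α) : NProgram α := CRule.hatN '' P

/-- The SOLP translation `σ^n` of a COLP rule. -/
def sigmaRule {α : Type} (n : ℕ) (r : CRule α) : SRule α n :=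
  ⟨r.head, r.isOkay, r.lits, [(SC.mk (.card (n - 1) (n - 1)) [Lit.pos r.head] [], true)]⟩

/-- The SOLP translation `σ^n` of a COLP program. -/
def sigmaP {α : Type} (n : ℕ) (P : CProgram α) : SProgram α n := sigmaRule n '' P

/-- The joint fixpoints `JFP(P_1,...,P_n)` of a collection of COLP programs. -/
def JFP {α : Type} {n : ℕ} (P : Fin n → CProgram α) : Set (Set α) :=
  ⋂ i, NFP (hatC (P i))

end SOLP

section Aux
open SOLP

variable {α γ δ : Type} {n : ℕ}

/-! ### Least model basics -/

def Closed (P : NProgram γ) (I : Set γ) : Prop :=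
  ∀ r ∈ P, (∀ a : γ, Lit.pos a ∈ r.body → a ∈ I) → r.head ∈ I

lemma leastModel_subset {P : NProgram γ} {I : Set γ} (h : Closed P I) :
    LeastModel P ⊆ I := fun _ hx => hx I h

lemma closed_leastModel (P : NProgram γ) : Closed P (LeastModel P) := by
  intro r hr hb I hI
  exact hI r hr fun a ha => hb a ha I hI

lemma mem_leastModel_of {P : NProgram γ} {r : NRule γ} (hr : r ∈ P)
    (hb : ∀ a : γ, Lit.pos a ∈ r.body → a ∈ LeastModel P) : r.head ∈ LeastModel P :=
  closed_leastModel P r hr hb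

lemma supported {P : NProgram γ} {x : γ} (hx : x ∈ LeastModel P) :
    ∃ r ∈ P, r.head = x ∧ ∀ a : γ, Lit.pos a ∈ r.body → a ∈ LeastModel P := by
  have h : Closed P {y | ∃ r ∈ P, r.head = y ∧
      ∀ a : γ, Lit.pos a ∈ r.body → a ∈ LeastModel P} := by
    intro r hr hb
    refine ⟨r, hr, rfl, fun a ha => ?_⟩
    obtain ⟨r', hr', hh, hb'⟩ := hb a ha
    exact hh ▸ mem_leastModel_of hr' hb'
  exact leastModel_subset h hx

/-! ### List lemmas -/

lemma pos_mem_map {f : γ → δ} {L : List (Lit γ)} {c : δ} :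
    Lit.pos c ∈ L.map (Lit.map f) ↔ ∃ c0, Lit.pos c0 ∈ L ∧ c = f c0 := by
  simp only [List.mem_map]
  constructor
  · rintro ⟨b, hb, he⟩
    cases b with
    | pos a => exact ⟨a, hb, by cases he; rfl⟩
    | neg a => simp [Lit.map] at he
  · rintro ⟨c0, hc0, rfl⟩
    exact ⟨Lit.pos c0, hc0, rfl⟩

lemma neg_mem_map {f : γ → δ} {L : List (Lit γ)} {c : δ} :
    Lit.neg c ∈ L.map (Lit.map f) ↔ ∃ c0, Lit.neg c0 ∈ L ∧ c = f c0 := by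
  simp only [List.mem_map]
  constructor
  · rintro ⟨b, hb, he⟩
    cases b with
    | neg a => exact ⟨a, hb, by cases he; rfl⟩
    | pos a => simp [Lit.map] at he
  · rintro ⟨c0, hc0, rfl⟩
    exact ⟨Lit.neg c0, hc0, rfl⟩

lemma pos_mem_filterMap {L : List (Lit γ)} {x : γ} :
    Lit.pos x ∈ L.filterMap Lit.posOnly ↔ Lit.pos x ∈ L := by
  simp only [List.mem_filterMap]
  constructor
  · rintro ⟨b, hb, he⟩
    cases b with
    | pos a => cases he; exact hb
    | neg a => simp [Lit.posOnly] at he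
  · intro h
    exact ⟨Lit.pos x, h, rfl⟩

lemma filterMap_posOnly_map (f : γ → δ) (L : List (Lit γ)) :
    (L.map (Lit.map f)).filterMap Lit.posOnly =
      (L.filterMap Lit.posOnly).map (Lit.map f) := by
  induction L with
  | nil => rfl
  | cons b t ih => cases b <;> simp [Lit.map, Lit.posOnly, List.filterMap_cons, ih]

/-! ### Splitting of labelled unions -/

def sliceI (i : Fin n) (M : Set (Fin n × γ)) : Set γ := {a | (i, a) ∈ M}

lemma sliceI_iUnion_image (S : Fin n → Set γ) (i : Fin n) :
    sliceI i (⋃ j, (fun t => ((j : Fin n), t)) '' S j) = S i := by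
  ext a
  simp only [sliceI, Set.mem_setOf_eq, Set.mem_iUnion, Set.mem_image, Prod.mk.injEq]
  constructor
  · rintro ⟨j, t, ht, rfl, rfl⟩; exact ht
  · intro h; exact ⟨i, a, h, rfl, rfl⟩

lemma eq_iUnion_image_sliceI (M : Set (Fin n × γ)) :
    M = ⋃ i, (fun t => ((i : Fin n), t)) '' sliceI i M := by
  ext ⟨i, a⟩
  simp only [Set.mem_iUnion, Set.mem_image, sliceI, Set.mem_setOf_eq, Prod.mk.injEq]
  constructor
  · intro h; exact ⟨i, a, h, rfl, rfl⟩
  · rintro ⟨j, t, ht, rfl, rfl⟩; exact ht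

lemma GLReduct_iUnion {ι : Type} (A : ι → NProgram γ) (M : Set γ) :
    GLReduct (⋃ i, A i) M = ⋃ i, GLReduct (A i) M := by
  ext r
  simp only [GLReduct, Set.mem_setOf_eq, Set.mem_iUnion]
  tauto

lemma GLReduct_labProg (i : Fin n) (P : NProgram γ) (M : Set (Fin n × γ)) :
    GLReduct (labProg i P) M = labProg i (GLReduct P (sliceI i M)) := by
  ext r
  simp only [GLReduct, labProg, Set.mem_image, Set.mem_setOf_eq]
  constructor
  · rintro ⟨r', ⟨r0, hr0, rfl⟩, hneg, rfl⟩
    refine ⟨⟨r0.head, r0.body.filterMap Lit.posOnly⟩,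
      ⟨r0, hr0, fun c hc => hneg _ (neg_mem_map.2 ⟨c, hc, rfl⟩), rfl⟩, ?_⟩
    simp only [NRule.map, filterMap_posOnly_map]
  · rintro ⟨r1, ⟨r0, hr0, hneg, rfl⟩, rfl⟩
    refine ⟨NRule.map (fun a => (i, a)) r0, ⟨r0, hr0, rfl⟩, ?_, ?_⟩
    · intro c hc
      simp only [NRule.map] at hc
      obtain ⟨c0, hc0, rfl⟩ := neg_mem_map.1 hc
      exact hneg c0 hc0
    · simp only [NRule.map, filterMap_posOnly_map]

lemma LeastModel_iUnion_lab (R : Fin n → NProgram γ) :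
    LeastModel (⋃ i, labProg i (R i)) =
      ⋃ i, (fun t => ((i : Fin n), t)) '' LeastModel (R i) := by
  apply Set.Subset.antisymm
  · apply leastModel_subset
    intro r hr hb
    simp only [Set.mem_iUnion, labProg, Set.mem_image] at hr
    obtain ⟨i, r0, hr0, rfl⟩ := hr
    have hhd : r0.head ∈ LeastModel (R i) := by
      apply mem_leastModel_of hr0
      intro a ha
      have hmem : Lit.pos ((i : Fin n), a) ∈ (NRule.map (fun a => ((i : Fin n), a)) r0).body := by
        simp only [NRule.map]
        exact pos_mem_map.2 ⟨a, ha, rfl⟩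
      have h2 := hb _ hmem
      simp only [Set.mem_iUnion, Set.mem_image, Prod.mk.injEq] at h2
      obtain ⟨j, b, hbLM, hj, hba⟩ := h2
      subst hj; subst hba
      exact hbLM
    exact Set.mem_iUnion.2 ⟨i, r0.head, hhd, rfl⟩
  · simp only [Set.iUnion_subset_iff]
    intro i x hx
    obtain ⟨a, ha, rfl⟩ := hx
    have hc : Closed (R i) (sliceI i (LeastModel (⋃ j, labProg j (R j)))) := by
      intro r hr hb
      have hmem : NRule.map (fun a => ((i : Fin n), a)) r ∈ ⋃ j, labProg j (R j) :=
        Set.mem_iUnion.2 ⟨i, ⟨r, hr, rfl⟩⟩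
      have := mem_leastModel_of hmem (fun c hc' => ?_)
      · exact this
      · simp only [NRule.map] at hc'
        obtain ⟨c0, hc0, rfl⟩ := pos_mem_map.1 hc'
        exact hb c0 hc0
    exact leastModel_subset hc ha

lemma mem_SMN_iUnion_lab (Ps : Fin n → NProgram γ) (M : Set (Fin n × γ)) :
    M ∈ SMN (⋃ i, labProg i (Ps i)) ↔ ∀ i, sliceI i M ∈ SMN (Ps i) := by
  have hred : GLReduct (⋃ i, labProg i (Ps i)) M =
      ⋃ i, labProg i (GLReduct (Ps i) (sliceI i M)) := by
    rw [GLReduct_iUnion]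
    exact Set.iUnion_congr fun i => GLReduct_labProg i (Ps i) M
  simp only [SMN, Set.mem_setOf_eq, hred, LeastModel_iUnion_lab]
  constructor
  · intro h i
    conv_lhs => rw [h]
    exact sliceI_iUnion_image _ i
  · intro h
    conv_lhs => rw [eq_iUnion_image_sliceI M]
    exact Set.iUnion_congr fun i => congrArg _ (h i)

/-! ### SOLP structural lemmas -/

lemma mem_AP {P : SProgram α n} {r : SRule α n} :
    r ∈ AP P ↔ ∃ r' ∈ P, r = ⟨r'.head, r'.isOkay, r'.lits, []⟩ := by
  simp only [AP, Set.mem_image]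
  constructor
  · rintro ⟨r', hr', rfl⟩; exact ⟨r', hr', rfl⟩
  · rintro ⟨r', hr', rfl⟩; exact ⟨r', hr', rfl⟩

lemma mem_AP_hatP {P : SProgram α n} {r : SRule α n} :
    r ∈ AP (hatP P) ↔
      (∃ r' ∈ P, r'.isOkay = false ∧ r = ⟨r'.head, false, r'.lits, []⟩) ∨
      (∃ r' ∈ P, r'.isOkay = true ∧ r = ⟨r'.head, false, Lit.pos r'.head :: r'.lits, []⟩) := by
  rw [mem_AP]
  constructor
  · rintro ⟨r', hr', rfl⟩
    simp only [hatP, Set.mem_union, Set.mem_setOf_eq, Set.mem_image] at hr'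
    rcases hr' with ⟨hr', hok⟩ | ⟨r0, ⟨hr0, hok⟩, rfl⟩
    · exact Or.inl ⟨r', hr', hok, by rw [hok]⟩
    · exact Or.inr ⟨r0, hr0, hok, rfl⟩
  · rintro (⟨r', hr', hok, rfl⟩ | ⟨r', hr', hok, rfl⟩)
    · exact ⟨r', Or.inl ⟨hr', hok⟩, by rw [hok]⟩
    · exact ⟨⟨r'.head, false, Lit.pos r'.head :: r'.lits, r'.scs⟩,
        Or.inr ⟨r', ⟨hr', hok⟩, rfl⟩, rfl⟩

lemma scs_AP_hatP {P : SProgram α n} {r : SRule α n} (hr : r ∈ AP (hatP P)) :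
    r.scs = [] := by
  rcases mem_AP_hatP.1 hr with ⟨r', _, _, rfl⟩ | ⟨r', _, _, rfl⟩ <;> rfl

lemma isOkay_AP_hatP {P : SProgram α n} {r : SRule α n} (hr : r ∈ AP (hatP P)) :
    r.isOkay = false := by
  rcases mem_AP_hatP.1 hr with ⟨r', _, _, rfl⟩ | ⟨r', _, _, rfl⟩ <;> rfl

lemma hatP_eq_self {Q : SProgram α n} (h : ∀ r ∈ Q, r.isOkay = false) :
    hatP Q = Q := by
  unfold hatP
  have he : {r ∈ Q | r.isOkay = true} = (∅ : Set (SRule α n)) := by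
    ext r; simp only [Set.mem_setOf_eq, Set.mem_empty_iff_false, iff_false, not_and]
    intro hr hok
    rw [h r hr] at hok; exact Bool.false_ne_true hok
  rw [he, Set.image_empty, Set.union_empty]
  ext r; simp only [Set.mem_setOf_eq, and_iff_left_iff_imp]
  exact fun hr => h r hr

lemma AP_hatP_idem (P : SProgram α n) : AP (hatP (AP (hatP P))) = AP (hatP P) := by
  rw [hatP_eq_self (fun r hr => isOkay_AP_hatP hr)]
  ext r
  rw [mem_AP]
  constructor
  · rintro ⟨r', hr', rfl⟩
    have hs := scs_AP_hatP hr'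
    obtain ⟨h, o, l, s⟩ := r'
    simp only at hs; subst hs; exact hr'
  · intro hr
    refine ⟨r, hr, ?_⟩
    have hs := scs_AP_hatP hr
    obtain ⟨h, o, l, s⟩ := r
    simp only at hs; subst hs; rfl

lemma head_mem_SVar {P : SProgram α n} {r : SRule α n} (hr : r ∈ P) :
    r.head ∈ SVar P := ⟨r, hr, Or.inl rfl⟩

lemma SVar_AP_hatP (P : SProgram α n) : SVar (AP (hatP P)) = SVar (AP P) := by
  ext a
  simp only [SVar, Set.mem_setOf_eq]
  constructor
  · rintro ⟨r, hr, hcase⟩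
    rcases mem_AP_hatP.1 hr with ⟨r', hr', hok, rfl⟩ | ⟨r', hr', hok, rfl⟩
    · exact ⟨⟨r'.head, r'.isOkay, r'.lits, []⟩, mem_AP.2 ⟨r', hr', rfl⟩, hcase⟩
    · refine ⟨⟨r'.head, r'.isOkay, r'.lits, []⟩, mem_AP.2 ⟨r', hr', rfl⟩, ?_⟩
      rcases hcase with h | ⟨b, hb, hba⟩ | ⟨p, hp, _⟩
      · exact Or.inl h
      · rcases List.mem_cons.1 hb with rfl | hb'
        · exact Or.inl hba
        · exact Or.inr (Or.inl ⟨b, hb', hba⟩)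
      · simp at hp
  · rintro ⟨r, hr, hcase⟩
    rcases mem_AP.1 hr with ⟨r', hr', rfl⟩
    by_cases hok : r'.isOkay = true
    · refine ⟨⟨r'.head, false, Lit.pos r'.head :: r'.lits, []⟩,
        mem_AP_hatP.2 (Or.inr ⟨r', hr', hok, rfl⟩), ?_⟩
      rcases hcase with h | ⟨b, hb, hba⟩ | ⟨p, hp, _⟩
      · exact Or.inl h
      · exact Or.inr (Or.inl ⟨b, List.mem_cons_of_mem _ hb, hba⟩)
      · simp at hp
    · exact ⟨⟨r'.head, false, r'.lits, []⟩,
        mem_AP_hatP.2 (Or.inl ⟨r', hr', Bool.eq_false_iff.2 hok, rfl⟩), hcase⟩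

lemma ATP_eq (P : SProgram α n) (F : Set α) :
    ATP P F = {a | ∃ r ∈ AP (hatP P), r.head = a ∧ litsTrue F r.lits} := by
  ext a
  simp only [ATP, Set.mem_union, Set.mem_setOf_eq]
  constructor
  · rintro (⟨r, hr, hok, hh, hl⟩ | ⟨r, hr, hok, hh, haF, hl⟩)
    · rcases mem_AP.1 hr with ⟨r', hr', rfl⟩
      exact ⟨⟨r'.head, false, r'.lits, []⟩,
        mem_AP_hatP.2 (Or.inl ⟨r', hr', hok, rfl⟩), hh, hl⟩
    · rcases mem_AP.1 hr with ⟨r', hr', rfl⟩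
      refine ⟨⟨r'.head, false, Lit.pos r'.head :: r'.lits, []⟩,
        mem_AP_hatP.2 (Or.inr ⟨r', hr', hok, rfl⟩), hh, ?_⟩
      intro b hb
      rcases List.mem_cons.1 hb with rfl | hb'
      · show r'.head ∈ F
        exact hh ▸ haF
      · exact hl b hb'
  · rintro ⟨r, hr, hh, hl⟩
    rcases mem_AP_hatP.1 hr with ⟨r', hr', hok, rfl⟩ | ⟨r', hr', hok, rfl⟩
    · exact Or.inl ⟨⟨r'.head, r'.isOkay, r'.lits, []⟩, mem_AP.2 ⟨r', hr', rfl⟩, hok, hh, hl⟩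
    · refine Or.inr ⟨⟨r'.head, r'.isOkay, r'.lits, []⟩, mem_AP.2 ⟨r', hr', rfl⟩, hok, hh, ?_, ?_⟩
      · have := hl (Lit.pos r'.head) List.mem_cons_self
        exact hh ▸ this
      · exact fun b hb => hl b (List.mem_cons_of_mem _ hb)

lemma AFP_iff (P : SProgram α n) (F : Set α) :
    F ∈ AFP P ↔ F ⊆ SVar (AP (hatP P)) ∧
      {a | ∃ r ∈ AP (hatP P), r.head = a ∧ litsTrue F r.lits} = F := by
  simp only [AFP, Set.mem_setOf_eq, SVar_AP_hatP, ATP_eq]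

lemma mem_Gamma'_core (P : SProgram α n) (r : NRule (GAtom α n)) :
    r ∈ Gamma' (AP (hatP P)) ↔
      (∃ a ∈ SVar (AP (hatP P)),
          r = ⟨GAtom.atm a, [Lit.neg (GAtom.prim a)]⟩ ∨
          r = ⟨GAtom.prim a, [Lit.neg (GAtom.atm a)]⟩) ∨
      (∃ r' ∈ AP (hatP P), r = ⟨GAtom.sup r'.head, r'.lits.map (Lit.map GAtom.atm)⟩) ∨
      (∃ a ∈ SVar (AP (hatP P)),
          r = ⟨GAtom.fail, [Lit.neg GAtom.fail, Lit.pos (GAtom.sup a), Lit.neg (GAtom.atm a)]⟩ ∨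
          r = ⟨GAtom.fail, [Lit.neg GAtom.fail, Lit.pos (GAtom.atm a), Lit.neg (GAtom.sup a)]⟩) := by
  have hV : SVar (AP (hatP (AP (hatP P)))) = SVar (AP (hatP P)) := by rw [AP_hatP_idem]
  have hTB : ∀ r' ∈ AP (hatP P),
      SRule.transBody r' = r'.lits.map (Lit.map GAtom.atm) := by
    intro r' hr'
    unfold SRule.transBody
    rw [scs_AP_hatP hr']
    simp
  simp only [Gamma', GammaS1, GammaS3, hV, Set.mem_union, Set.mem_setOf_eq]
  constructor
  · rintro ((h | ⟨r', hr', rfl⟩) | h)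
    · exact Or.inl h
    · exact Or.inr (Or.inl ⟨r', hr', by rw [hTB r' hr']⟩)
    · exact Or.inr (Or.inr h)
  · rintro (h | ⟨r', hr', rfl⟩ | h)
    · exact Or.inl (Or.inl h)
    · exact Or.inl (Or.inr ⟨r', hr', by rw [hTB r' hr']⟩)
    · exact Or.inr h

lemma mem_GLReduct_core (P : SProgram α n) (M : Set (GAtom α n)) (s : NRule (GAtom α n)) :
    s ∈ GLReduct (Gamma' (AP (hatP P))) M ↔
      (∃ a ∈ SVar (AP (hatP P)), GAtom.prim a ∉ M ∧ s = ⟨GAtom.atm a, []⟩) ∨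
      (∃ a ∈ SVar (AP (hatP P)), GAtom.atm a ∉ M ∧ s = ⟨GAtom.prim a, []⟩) ∨
      (∃ r' ∈ AP (hatP P), (∀ c, Lit.neg c ∈ r'.lits → GAtom.atm c ∉ M) ∧
          s = ⟨GAtom.sup r'.head, (r'.lits.filterMap Lit.posOnly).map (Lit.map GAtom.atm)⟩) ∨
      (∃ a ∈ SVar (AP (hatP P)), GAtom.fail ∉ M ∧ GAtom.atm a ∉ M ∧
          s = ⟨GAtom.fail, [Lit.pos (GAtom.sup a)]⟩) ∨
      (∃ a ∈ SVar (AP (hatP P)), GAtom.fail ∉ M ∧ GAtom.sup a ∉ M ∧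
          s = ⟨GAtom.fail, [Lit.pos (GAtom.atm a)]⟩) := by
  simp only [GLReduct, Set.mem_setOf_eq]
  constructor
  · rintro ⟨r', hr', hneg, rfl⟩
    rcases (mem_Gamma'_core P r').1 hr' with
      ⟨a, ha, (rfl | rfl)⟩ | ⟨r0, hr0, rfl⟩ | ⟨a, ha, (rfl | rfl)⟩
    · exact Or.inl ⟨a, ha, hneg _ (by simp), by simp [Lit.posOnly]⟩
    · exact Or.inr (Or.inl ⟨a, ha, hneg _ (by simp), by simp [Lit.posOnly]⟩)
    · exact Or.inr (Or.inr (Or.inl ⟨r0, hr0,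
        fun c hc => hneg _ (neg_mem_map.2 ⟨c, hc, rfl⟩),
        by simp only [filterMap_posOnly_map]⟩))
    · exact Or.inr (Or.inr (Or.inr (Or.inl ⟨a, ha, hneg _ (by simp), hneg _ (by simp),
        rfl⟩)))
    · exact Or.inr (Or.inr (Or.inr (Or.inr ⟨a, ha, hneg _ (by simp), hneg _ (by simp),
        rfl⟩)))
  · rintro (⟨a, ha, hprim, rfl⟩ | ⟨a, ha, hatm, rfl⟩ | ⟨r0, hr0, hneg, rfl⟩ |
      ⟨a, ha, hf, hatm, rfl⟩ | ⟨a, ha, hf, hsup, rfl⟩)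
    · refine ⟨⟨GAtom.atm a, [Lit.neg (GAtom.prim a)]⟩,
        (mem_Gamma'_core P _).2 (Or.inl ⟨a, ha, Or.inl rfl⟩), ?_, by simp [Lit.posOnly]⟩
      intro c hc
      simp only [List.mem_singleton, Lit.neg.injEq] at hc
      subst hc; exact hprim
    · refine ⟨⟨GAtom.prim a, [Lit.neg (GAtom.atm a)]⟩,
        (mem_Gamma'_core P _).2 (Or.inl ⟨a, ha, Or.inr rfl⟩), ?_, by simp [Lit.posOnly]⟩
      intro c hc
      simp only [List.mem_singleton, Lit.neg.injEq] at hc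
      subst hc; exact hatm
    · refine ⟨⟨GAtom.sup r0.head, r0.lits.map (Lit.map GAtom.atm)⟩,
        (mem_Gamma'_core P _).2 (Or.inr (Or.inl ⟨r0, hr0, rfl⟩)), ?_,
        by simp only [filterMap_posOnly_map]⟩
      intro c hc
      obtain ⟨c0, hc0, rfl⟩ := neg_mem_map.1 hc
      exact hneg c0 hc0
    · refine ⟨⟨GAtom.fail, [Lit.neg GAtom.fail, Lit.pos (GAtom.sup a), Lit.neg (GAtom.atm a)]⟩,
        (mem_Gamma'_core P _).2 (Or.inr (Or.inr ⟨a, ha, Or.inl rfl⟩)), ?_,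
        rfl⟩
      intro c hc
      simp only [List.mem_cons, List.mem_singleton, List.not_mem_nil, or_false,
        Lit.neg.injEq, reduceCtorEq, false_or] at hc
      rcases hc with rfl | rfl
      · exact hf
      · exact hatm
    · refine ⟨⟨GAtom.fail, [Lit.neg GAtom.fail, Lit.pos (GAtom.atm a), Lit.neg (GAtom.sup a)]⟩,
        (mem_Gamma'_core P _).2 (Or.inr (Or.inr ⟨a, ha, Or.inr rfl⟩)), ?_,
        rfl⟩
      intro c hc
      simp only [List.mem_cons, List.mem_singleton, List.not_mem_nil, or_false,
        Lit.neg.injEq, reduceCtorEq, false_or] at hc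
      rcases hc with rfl | rfl
      · exact hf
      · exact hsup

lemma core (P : SProgram α n) :
    SMN (Gamma' (AP (hatP P))) = {M | ∃ F ∈ AFP P, M = encode P F} := by
  ext M
  simp only [SMN, Set.mem_setOf_eq]
  constructor
  · intro hM
    set F : Set α := {a : α | GAtom.atm a ∈ M} with hFdef
    have hfail : GAtom.fail ∉ M := by
      intro hf
      have hclosed : Closed (GLReduct (Gamma' (AP (hatP P))) M) (M \ {GAtom.fail}) := by
        intro s hs hb
        have hsM : s.head ∈ M := by
          rw [hM]
          exact mem_leastModel_of hs fun a ha => hM ▸ (hb a ha).1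
        refine ⟨hsM, ?_⟩
        rcases (mem_GLReduct_core P M s).1 hs with
          ⟨a,_,_,rfl⟩|⟨a,_,_,rfl⟩|⟨r',_,_,rfl⟩|⟨a,_,hnf,_,rfl⟩|⟨a,_,hnf,_,rfl⟩
        · simp
        · simp
        · simp
        · exact absurd hf hnf
        · exact absurd hf hnf
      have h2 : GAtom.fail ∈ M \ {GAtom.fail} := leastModel_subset hclosed (hM ▸ hf)
      exact h2.2 rfl
    have hprim_of : ∀ a ∈ SVar (AP (hatP P)), GAtom.atm a ∉ M → GAtom.prim a ∈ M := by
      intro a ha hna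
      have hs : (⟨GAtom.prim a, []⟩ : NRule (GAtom α n)) ∈
          GLReduct (Gamma' (AP (hatP P))) M :=
        (mem_GLReduct_core P M _).2 (Or.inr (Or.inl ⟨a, ha, hna, rfl⟩))
      rw [hM]
      exact mem_leastModel_of hs fun c hc => by simp at hc
    have hsup_iff : ∀ a : α,
        (GAtom.sup a ∈ M ↔ ∃ r' ∈ AP (hatP P), r'.head = a ∧ litsTrue F r'.lits) := by
      intro a
      constructor
      · intro hsup
        obtain ⟨s, hsR, hh, hbody⟩ := supported (hM ▸ hsup)
        rcases (mem_GLReduct_core P M s).1 hsR with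
          ⟨b,_,_,rfl⟩|⟨b,_,_,rfl⟩|⟨r',hr',hneg,rfl⟩|⟨b,_,_,_,rfl⟩|⟨b,_,_,_,rfl⟩
        · simp at hh
        · simp at hh
        · have hha : r'.head = a := by simpa using hh
          refine ⟨r', hr', hha, ?_⟩
          intro b hb
          cases b with
          | pos c =>
            show c ∈ F
            have hp1 : Lit.pos c ∈ r'.lits.filterMap Lit.posOnly := pos_mem_filterMap.2 hb
            have hp2 : Lit.pos (GAtom.atm c) ∈
                (r'.lits.filterMap Lit.posOnly).map (Lit.map GAtom.atm) :=
              List.mem_map_of_mem (f := Lit.map (GAtom.atm (α := α) (n := n))) hp1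
            have := hbody _ hp2
            show GAtom.atm c ∈ M
            rw [hM]; exact this
          | neg c =>
            show c ∉ F
            exact fun hcF => hneg c hb hcF
        · simp at hh
        · simp at hh
      · rintro ⟨r', hr', rfl, hlits⟩
        have hs : (⟨GAtom.sup r'.head, (r'.lits.filterMap Lit.posOnly).map
            (Lit.map GAtom.atm)⟩ : NRule (GAtom α n)) ∈
            GLReduct (Gamma' (AP (hatP P))) M :=
          (mem_GLReduct_core P M _).2 (Or.inr (Or.inr (Or.inl ⟨r', hr',
            fun c hc => hlits (Lit.neg c) hc, rfl⟩)))
        rw [hM]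
        apply mem_leastModel_of hs
        intro x hx
        obtain ⟨c0, hc1, rfl⟩ := pos_mem_map.1 hx
        have hc2 : Lit.pos c0 ∈ r'.lits := pos_mem_filterMap.1 hc1
        have hcF : c0 ∈ F := hlits _ hc2
        exact hM ▸ (hcF : GAtom.atm c0 ∈ M)
    have hsup_atm : ∀ a ∈ SVar (AP (hatP P)), (GAtom.sup a ∈ M ↔ GAtom.atm a ∈ M) := by
      intro a ha
      constructor
      · intro hsup
        by_contra hatm
        have hs : (⟨GAtom.fail, [Lit.pos (GAtom.sup a)]⟩ : NRule (GAtom α n)) ∈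
            GLReduct (Gamma' (AP (hatP P))) M :=
          (mem_GLReduct_core P M _).2
            (Or.inr (Or.inr (Or.inr (Or.inl ⟨a, ha, hfail, hatm, rfl⟩))))
        have hf : GAtom.fail ∈ M := by
          rw [hM]
          apply mem_leastModel_of hs
          intro x hx
          simp only [List.mem_singleton, Lit.pos.injEq] at hx
          subst hx
          exact hM ▸ hsup
        exact hfail hf
      · intro hatm
        by_contra hsup
        have hs : (⟨GAtom.fail, [Lit.pos (GAtom.atm a)]⟩ : NRule (GAtom α n)) ∈
            GLReduct (Gamma' (AP (hatP P))) M :=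
          (mem_GLReduct_core P M _).2
            (Or.inr (Or.inr (Or.inr (Or.inr ⟨a, ha, hfail, hsup, rfl⟩))))
        have hf : GAtom.fail ∈ M := by
          rw [hM]
          apply mem_leastModel_of hs
          intro x hx
          simp only [List.mem_singleton, Lit.pos.injEq] at hx
          subst hx
          exact hM ▸ hatm
        exact hfail hf
    have hFsub : F ⊆ SVar (AP (hatP P)) := by
      intro a haF
      have haM : GAtom.atm a ∈ M := haF
      obtain ⟨s, hsR, hh, -⟩ := supported (hM ▸ haM)
      rcases (mem_GLReduct_core P M s).1 hsR with
        ⟨b,hb,-,rfl⟩|⟨b,-,-,rfl⟩|⟨r',-,-,rfl⟩|⟨b,-,-,-,rfl⟩|⟨b,-,-,-,rfl⟩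
      · obtain rfl : b = a := by simpa using hh
        exact hb
      · simp at hh
      · simp at hh
      · simp at hh
      · simp at hh
    have hfix : {x | ∃ r ∈ AP (hatP P), r.head = x ∧ litsTrue F r.lits} = F := by
      ext a
      simp only [Set.mem_setOf_eq]
      constructor
      · intro h
        obtain ⟨r', hr', hh, hl⟩ := h
        have haV : a ∈ SVar (AP (hatP P)) := hh ▸ head_mem_SVar hr'
        exact (hsup_atm a haV).1 ((hsup_iff a).2 ⟨r', hr', hh, hl⟩)
      · intro haF
        exact (hsup_iff a).1 ((hsup_atm a (hFsub haF)).2 haF)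
    refine ⟨F, (AFP_iff P F).2 ⟨hFsub, hfix⟩, ?_⟩
    apply Set.Subset.antisymm
    · intro x hx
      obtain ⟨s, hsR, hh, -⟩ := supported (hM ▸ hx)
      rcases (mem_GLReduct_core P M s).1 hsR with
        ⟨a,ha,hna,rfl⟩|⟨a,ha,hna,rfl⟩|⟨r',hr',-,rfl⟩|⟨a,-,-,-,rfl⟩|⟨a,-,-,-,rfl⟩
      · subst hh
        simp only [encode, Set.mem_union, Set.mem_image]
        exact Or.inl (Or.inl ⟨a, hx, rfl⟩)
      · subst hh
        simp only [encode, Set.mem_union, Set.mem_image, Set.mem_diff]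
        exact Or.inl (Or.inr ⟨a, ⟨ha, fun h => hna h⟩, rfl⟩)
      · subst hh
        simp only [encode, Set.mem_union, Set.mem_image]
        exact Or.inr ⟨r'.head, (hsup_atm _ (head_mem_SVar hr')).1 hx, rfl⟩
      · subst hh
        exact absurd hx hfail
      · subst hh
        exact absurd hx hfail
    · intro x hxe
      simp only [encode, Set.mem_union, Set.mem_image, Set.mem_diff] at hxe
      rcases hxe with (⟨a, haF, rfl⟩ | ⟨a, ⟨haV, hnaF⟩, rfl⟩) | ⟨a, haF, rfl⟩
      · exact haF
      · exact hprim_of a haV (fun h => hnaF h)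
      · exact (hsup_atm a (hFsub haF)).2 haF
  · rintro ⟨F, hFA, rfl⟩
    obtain ⟨hFsub, hfix⟩ := (AFP_iff P F).1 hFA
    have hatmM : ∀ a : α, (GAtom.atm a ∈ encode P F ↔ a ∈ F) := by
      intro a; simp [encode]
    have hprimM : ∀ a : α,
        (GAtom.prim a ∈ encode P F ↔ a ∈ SVar (AP (hatP P)) ∧ a ∉ F) := by
      intro a; simp [encode]
    have hsupM : ∀ a : α, (GAtom.sup a ∈ encode P F ↔ a ∈ F) := by
      intro a; simp [encode]
    have hfailM : GAtom.fail ∉ encode P F := by simp [encode]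
    apply Set.Subset.antisymm
    · have hatmLM : ∀ a ∈ F, GAtom.atm a ∈
          LeastModel (GLReduct (Gamma' (AP (hatP P))) (encode P F)) := by
        intro a haF
        have hprimnot : GAtom.prim a ∉ encode P F := by
          rw [hprimM]; rintro ⟨-, h⟩; exact h haF
        have hs : (⟨GAtom.atm a, []⟩ : NRule (GAtom α n)) ∈
            GLReduct (Gamma' (AP (hatP P))) (encode P F) :=
          (mem_GLReduct_core P _ _).2 (Or.inl ⟨a, hFsub haF, hprimnot, rfl⟩)
        exact mem_leastModel_of hs fun c hc => by simp at hc
      intro x hxe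
      simp only [encode, Set.mem_union, Set.mem_image, Set.mem_diff] at hxe
      rcases hxe with (⟨a, haF, rfl⟩ | ⟨a, ⟨haV, hnaF⟩, rfl⟩) | ⟨a, haF, rfl⟩
      · exact hatmLM a haF
      · have hnatm : GAtom.atm a ∉ encode P F := by rw [hatmM]; exact hnaF
        have hs : (⟨GAtom.prim a, []⟩ : NRule (GAtom α n)) ∈
            GLReduct (Gamma' (AP (hatP P))) (encode P F) :=
          (mem_GLReduct_core P _ _).2 (Or.inr (Or.inl ⟨a, haV, hnatm, rfl⟩))
        exact mem_leastModel_of hs fun c hc => by simp at hc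
      · have h2 : a ∈ {x | ∃ r ∈ AP (hatP P), r.head = x ∧ litsTrue F r.lits} :=
          hfix.symm ▸ haF
        obtain ⟨r', hr', hha, hlits⟩ := h2
        have hs : (⟨GAtom.sup r'.head, (r'.lits.filterMap Lit.posOnly).map
            (Lit.map GAtom.atm)⟩ : NRule (GAtom α n)) ∈
            GLReduct (Gamma' (AP (hatP P))) (encode P F) :=
          (mem_GLReduct_core P _ _).2 (Or.inr (Or.inr (Or.inl ⟨r', hr',
            fun c hc hmem => hlits (Lit.neg c) hc ((hatmM c).1 hmem), rfl⟩)))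
        refine hha ▸ mem_leastModel_of hs fun x hx => ?_
        obtain ⟨c0, hc1, rfl⟩ := pos_mem_map.1 hx
        exact hatmLM c0 (hlits _ (pos_mem_filterMap.1 hc1))
    · apply leastModel_subset
      intro s hs hb
      rcases (mem_GLReduct_core P (encode P F) s).1 hs with
        ⟨a,ha,hna,rfl⟩|⟨a,ha,hna,rfl⟩|⟨r',hr',hneg,rfl⟩|⟨a,ha,hnf,hna,rfl⟩|⟨a,ha,hnf,hna,rfl⟩
      · show GAtom.atm a ∈ encode P F
        rw [hatmM]
        by_contra hnaF
        exact hna ((hprimM a).2 ⟨ha, hnaF⟩)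
      · show GAtom.prim a ∈ encode P F
        rw [hprimM]
        exact ⟨ha, fun haF => hna ((hatmM a).2 haF)⟩
      · show GAtom.sup r'.head ∈ encode P F
        rw [hsupM]
        have hlits : litsTrue F r'.lits := by
          intro b hb'
          cases b with
          | pos c =>
            show c ∈ F
            have hx : Lit.pos (GAtom.atm c) ∈
                (r'.lits.filterMap Lit.posOnly).map (Lit.map GAtom.atm) :=
              List.mem_map_of_mem (f := Lit.map (GAtom.atm (α := α) (n := n)))
                (pos_mem_filterMap.2 hb')
            exact (hatmM c).1 (hb _ hx)
          | neg c =>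
            show c ∉ F
            intro hcF
            exact hneg c hb' ((hatmM c).2 hcF)
        exact hfix ▸ (⟨r', hr', rfl, hlits⟩ :
          r'.head ∈ {x | ∃ r ∈ AP (hatP P), r.head = x ∧ litsTrue F r.lits})
      · have h1 : GAtom.sup a ∈ encode P F := hb _ (by simp)
        exact absurd ((hatmM a).2 ((hsupM a).1 h1)) hna
      · have h1 : GAtom.atm a ∈ encode P F := hb _ (by simp)
        exact absurd ((hsupM a).2 ((hatmM a).1 h1)) hna

end Aux

open SOLP in
/-- `SM(P_u) = B` where `P_u = ∪_i Γ'(A(P̂_i))` (labelled w.r.t. `P_i`). -/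
theorem sm_pu_eq_b {α : Type} {n : ℕ} (C : Fin n → SProgram α n) :
    SMN (⋃ i, labProg i (Gamma' (AP (hatP (C i))))) =
      {X | ∃ F : Fin n → Set α, (∀ i, F i ∈ AFP (C i)) ∧
        X = ⋃ i, (((fun a => ((i : Fin n), GAtom.atm a)) '' F i) ∪
          (((fun t => ((i : Fin n), t)) '' encode (C i) (F i)) \
            ((fun a => ((i : Fin n), GAtom.atm a)) '' F i)))} := by
  have hsub : ∀ (F : Fin n → Set α) (i : Fin n), F i ∈ AFP (C i) →
      ((fun a => ((i : Fin n), GAtom.atm a)) '' F i) ⊆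
        ((fun t => ((i : Fin n), t)) '' encode (C i) (F i)) := by
    intro F i _ x hx
    obtain ⟨a, ha, rfl⟩ := hx
    refine ⟨GAtom.atm a, ?_, rfl⟩
    simp only [encode, Set.mem_union, Set.mem_image]
    exact Or.inl (Or.inl ⟨a, ha, rfl⟩)
  ext M
  rw [mem_SMN_iUnion_lab]
  simp only [Set.mem_setOf_eq]
  constructor
  · intro h
    have h' : ∀ i, ∃ F ∈ AFP (C i), sliceI i M = encode (C i) F := by
      intro i
      have hi := h i
      rw [core (C i)] at hi
      exact hi
    choose F hF1 hF2 using h'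
    refine ⟨F, hF1, ?_⟩
    calc M = ⋃ i, (fun t => ((i : Fin n), t)) '' sliceI i M := eq_iUnion_image_sliceI M
      _ = ⋃ i, (fun t => ((i : Fin n), t)) '' encode (C i) (F i) :=
          Set.iUnion_congr fun i => congrArg _ (hF2 i)
      _ = ⋃ i, (((fun a => ((i : Fin n), GAtom.atm a)) '' F i) ∪
            (((fun t => ((i : Fin n), t)) '' encode (C i) (F i)) \ ((fun a => ((i : Fin n), GAtom.atm a)) '' F i))) :=
          Set.iUnion_congr fun i => (Set.union_diff_cancel (hsub F i (hF1 i))).symm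
  · rintro ⟨F, hF, rfl⟩
    intro i
    rw [core (C i)]
    refine ⟨F i, hF i, ?_⟩
    have heq : (⋃ j, (((fun a => ((j : Fin n), GAtom.atm a)) '' F j) ∪
          (((fun t => ((j : Fin n), t)) '' encode (C j) (F j)) \ ((fun a => ((j : Fin n), GAtom.atm a)) '' F j)))) =
        ⋃ j, (fun t => ((j : Fin n), t)) '' encode (C j) (F j) :=
      Set.iUnion_congr fun j => Set.union_diff_cancel (hsub F j (hF j))
    rw [heq, sliceI_iUnion_image]
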